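/- For the map F(y) = (1 + |y|/2)·y/|y| on 0 < |y| ≤ 2 in ℝ², the push-forward of the identity conductivity σ₀ = I is σ(x) = ((|x|−1)/|x|)·Π(x) + (|x|/(|x|−1))·(I − Π(x)) for 1 < |x| < 2, where Π(x) is the orthogonal projection onto the radial direction x/|x|. -/

import Mathlib

open scoped RealInnerProductSpace

/-- The two-dimensional cloaking blow-up map `F(y) = (1 + |y|/2) y/|y|` (for `0 < |y| ≤ 2`),
extended by the identity outside. -/
noncomputable def cloakF (y : EuclideanSpace ℝ (Fin 2)) : EuclideanSpace ℝ (Fin 2) :=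
  if 2 < ‖y‖ then y else (1 + ‖y‖ / 2) • (‖y‖⁻¹ • y)

/-- The projection `Π(x)` onto the radial direction `x/|x|`, as a matrix. -/
noncomputable def radialProj (x : EuclideanSpace ℝ (Fin 2)) : Matrix (Fin 2) (Fin 2) ℝ :=
  Matrix.of fun i j => x i * x j / ‖x‖ ^ 2

lemma norm_hasFDerivAt (y : EuclideanSpace ℝ (Fin 2)) (h0 : y ≠ 0) :
    HasFDerivAt (fun z : EuclideanSpace ℝ (Fin 2) => ‖z‖)
      ((1 / (2 * ‖y‖)) • ((fderivInnerCLM ℝ (y, y)).comp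
        ((ContinuousLinearMap.id ℝ _).prod (ContinuousLinearMap.id ℝ _)))) y := by
  have hn2 : HasFDerivAt (fun z : EuclideanSpace ℝ (Fin 2) => ⟪z, z⟫)
      ((fderivInnerCLM ℝ (y, y)).comp
        ((ContinuousLinearMap.id ℝ _).prod (ContinuousLinearMap.id ℝ _))) y :=
    (hasFDerivAt_id y).inner ℝ (hasFDerivAt_id y)
  have hne : ⟪y, y⟫ ≠ 0 := by
    rw [real_inner_self_eq_norm_sq]
    exact pow_ne_zero 2 (norm_ne_zero_iff.mpr h0)
  have h := hn2.sqrt hne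
  have heq : (fun z : EuclideanSpace ℝ (Fin 2) => Real.sqrt ⟪z, z⟫) = fun z => ‖z‖ := by
    funext z
    rw [real_inner_self_eq_norm_sq, Real.sqrt_sq (norm_nonneg z)]
  have heqy : Real.sqrt ⟪y, y⟫ = ‖y‖ := by
    rw [real_inner_self_eq_norm_sq, Real.sqrt_sq (norm_nonneg y)]
  rw [heq, heqy] at h
  exact h

lemma cloakF_fderiv (y : EuclideanSpace ℝ (Fin 2)) (h0 : y ≠ 0) (h2 : ‖y‖ < 2) (p q : Fin 2) :
    fderiv ℝ (fun z => cloakF z p) y (EuclideanSpace.single q 1)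
      = (if p = q then ‖y‖⁻¹ + 1 / 2 else 0) - y p * y q / ‖y‖ ^ 3 := by
  have hny : ‖y‖ ≠ 0 := norm_ne_zero_iff.mpr h0
  set D := ((1 / (2 * ‖y‖)) • ((fderivInnerCLM ℝ (y, y)).comp
        ((ContinuousLinearMap.id ℝ _).prod (ContinuousLinearMap.id ℝ _)))) with hD
  have hnorm := norm_hasFDerivAt y h0
  have hinv : HasFDerivAt (fun z : EuclideanSpace ℝ (Fin 2) => ‖z‖⁻¹)
      ((-(‖y‖ ^ 2)⁻¹) • D) y := (hasDerivAt_inv hny).comp_hasFDerivAt y hnorm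
  have hproj : HasFDerivAt (fun z : EuclideanSpace ℝ (Fin 2) => z p)
      (EuclideanSpace.proj p : EuclideanSpace ℝ (Fin 2) →L[ℝ] ℝ) y :=
    (EuclideanSpace.proj p : EuclideanSpace ℝ (Fin 2) →L[ℝ] ℝ).hasFDerivAt
  have htot : HasFDerivAt (fun z : EuclideanSpace ℝ (Fin 2) => ‖z‖⁻¹ * z p + z p / 2)
      ((‖y‖⁻¹ • (EuclideanSpace.proj p : EuclideanSpace ℝ (Fin 2) →L[ℝ] ℝ) + y p • ((-(‖y‖ ^ 2)⁻¹) • D))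
        + (2 : ℝ)⁻¹ • (EuclideanSpace.proj p : EuclideanSpace ℝ (Fin 2) →L[ℝ] ℝ)) y := by
    have h2' : HasFDerivAt (fun z : EuclideanSpace ℝ (Fin 2) => z p / 2)
        ((2 : ℝ)⁻¹ • (EuclideanSpace.proj p : EuclideanSpace ℝ (Fin 2) →L[ℝ] ℝ)) y := by
      simpa [div_eq_inv_mul, smul_smul, Pi.smul_def] using hproj.const_smul ((2 : ℝ)⁻¹)
    exact (hinv.mul hproj).add h2'
  have hev : (fun z => cloakF z p) =ᶠ[nhds y]
      (fun z : EuclideanSpace ℝ (Fin 2) => ‖z‖⁻¹ * z p + z p / 2) := by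
    have hopen : IsOpen {z : EuclideanSpace ℝ (Fin 2) | ‖z‖ < 2 ∧ z ≠ 0} := by
      exact (isOpen_lt (continuous_norm) continuous_const).inter isOpen_ne
    have hmem : y ∈ {z : EuclideanSpace ℝ (Fin 2) | ‖z‖ < 2 ∧ z ≠ 0} := ⟨h2, h0⟩
    filter_upwards [hopen.mem_nhds hmem] with z hz
    obtain ⟨hz2, hz0⟩ := hz
    have hzn : ‖z‖ ≠ 0 := norm_ne_zero_iff.mpr hz0
    simp only [cloakF, if_neg (not_lt.mpr hz2.le), PiLp.smul_apply, smul_eq_mul]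
    field_simp
  rw [hev.fderiv_eq, htot.fderiv]
  simp only [ContinuousLinearMap.add_apply, ContinuousLinearMap.smul_apply, hD,
    ContinuousLinearMap.coe_smul', Pi.smul_apply, ContinuousLinearMap.comp_apply,
    ContinuousLinearMap.prod_apply, ContinuousLinearMap.id_apply, fderivInnerCLM_apply,
    PiLp.proj_apply, smul_eq_mul,
    EuclideanSpace.inner_single_right, EuclideanSpace.inner_single_left, RCLike.star_def,
    conj_trivial, EuclideanSpace.single_apply]
  rcases eq_or_ne p q with h | h
  · subst h
    simp only [if_pos rfl, EuclideanSpace.single_apply, if_pos rfl, if_true]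
    field_simp
    ring
  · simp only [if_neg h]
    field_simp
    ring

lemma detlem (t u v : ℝ) (h1 : 1 < t) (h2 : t < 2) (hs : u * u + v * v = t ^ 2) :
    (t / (2 * (t - 1)) - (t ^ 2)⁻¹ * ((t - 1)⁻¹ * 2⁻¹) * (u * u)) *
          (t / (2 * (t - 1)) - (t ^ 2)⁻¹ * ((t - 1)⁻¹ * 2⁻¹) * (v * v)) -
        (t ^ 2)⁻¹ * ((t - 1)⁻¹ * 2⁻¹) * (u * v) * ((t ^ 2)⁻¹ * ((t - 1)⁻¹ * 2⁻¹) * (v * u)) =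
      t / (4 * (t - 1)) := by
  have ht0 : (0:ℝ) < t := lt_trans one_pos h1
  have htne : t ≠ 0 := ne_of_gt ht0
  have htm : t - 1 ≠ 0 := by intro h; linarith
  field_simp
  linear_combination (-4 * t ^ 3) * hs

lemma entry00 (t u v : ℝ) (h1 : 1 < t) (h2 : t < 2) (hs : u * u + v * v = t ^ 2) :
    ((t / (2 * (t - 1)) - (t ^ 2)⁻¹ * ((t - 1)⁻¹ * 2⁻¹) * (u * u)) *
            (t / (2 * (t - 1)) - (t ^ 2)⁻¹ * ((t - 1)⁻¹ * 2⁻¹) * (v * v)) -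
          (t ^ 2)⁻¹ * ((t - 1)⁻¹ * 2⁻¹) * (u * v) * ((t ^ 2)⁻¹ * ((t - 1)⁻¹ * 2⁻¹) * (v * u)))⁻¹ *
      ((t / (2 * (t - 1)) - (t ^ 2)⁻¹ * ((t - 1)⁻¹ * 2⁻¹) * (u * u)) *
          (t / (2 * (t - 1)) - (t ^ 2)⁻¹ * ((t - 1)⁻¹ * 2⁻¹) * (u * u)) +
        (t ^ 2)⁻¹ * ((t - 1)⁻¹ * 2⁻¹) * (u * v) * ((t ^ 2)⁻¹ * ((t - 1)⁻¹ * 2⁻¹) * (u * v))) =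
    (t - 1) / t * (u * u / t ^ 2) + t / (t - 1) * (1 - u * u / t ^ 2) := by
  have ht0 : (0:ℝ) < t := lt_trans one_pos h1
  have htne : t ≠ 0 := ne_of_gt ht0
  have htm : t - 1 ≠ 0 := by intro h; linarith
  rw [detlem t u v h1 h2 hs]
  field_simp
  linear_combination (4 * (u * u)) * hs

lemma entry01 (t u v : ℝ) (h1 : 1 < t) (h2 : t < 2) (hs : u * u + v * v = t ^ 2) :
    ((t / (2 * (t - 1)) - (t ^ 2)⁻¹ * ((t - 1)⁻¹ * 2⁻¹) * (u * u)) *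
            (t / (2 * (t - 1)) - (t ^ 2)⁻¹ * ((t - 1)⁻¹ * 2⁻¹) * (v * v)) -
          (t ^ 2)⁻¹ * ((t - 1)⁻¹ * 2⁻¹) * (u * v) * ((t ^ 2)⁻¹ * ((t - 1)⁻¹ * 2⁻¹) * (v * u)))⁻¹ *
      (-((t / (2 * (t - 1)) - (t ^ 2)⁻¹ * ((t - 1)⁻¹ * 2⁻¹) * (u * u)) *
            ((t ^ 2)⁻¹ * ((t - 1)⁻¹ * 2⁻¹) * (v * u))) +
        -((t ^ 2)⁻¹ * ((t - 1)⁻¹ * 2⁻¹) * (u * v) *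
            (t / (2 * (t - 1)) - (t ^ 2)⁻¹ * ((t - 1)⁻¹ * 2⁻¹) * (v * v)))) =
    (t - 1) / t * (u * v / t ^ 2) + -(t / (t - 1) * (u * v / t ^ 2)) := by
  have ht0 : (0:ℝ) < t := lt_trans one_pos h1
  have htne : t ≠ 0 := ne_of_gt ht0
  have htm : t - 1 ≠ 0 := by intro h; linarith
  rw [detlem t u v h1 h2 hs]
  field_simp
  linear_combination (4 * (u * v)) * hs

lemma entry10 (t u v : ℝ) (h1 : 1 < t) (h2 : t < 2) (hs : u * u + v * v = t ^ 2) :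
    ((t / (2 * (t - 1)) - (t ^ 2)⁻¹ * ((t - 1)⁻¹ * 2⁻¹) * (u * u)) *
            (t / (2 * (t - 1)) - (t ^ 2)⁻¹ * ((t - 1)⁻¹ * 2⁻¹) * (v * v)) -
          (t ^ 2)⁻¹ * ((t - 1)⁻¹ * 2⁻¹) * (u * v) * ((t ^ 2)⁻¹ * ((t - 1)⁻¹ * 2⁻¹) * (v * u)))⁻¹ *
      (-((t ^ 2)⁻¹ * ((t - 1)⁻¹ * 2⁻¹) * (v * u) *
            (t / (2 * (t - 1)) - (t ^ 2)⁻¹ * ((t - 1)⁻¹ * 2⁻¹) * (u * u))) +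
        -((t / (2 * (t - 1)) - (t ^ 2)⁻¹ * ((t - 1)⁻¹ * 2⁻¹) * (v * v)) *
            ((t ^ 2)⁻¹ * ((t - 1)⁻¹ * 2⁻¹) * (u * v)))) =
    (t - 1) / t * (v * u / t ^ 2) + -(t / (t - 1) * (v * u / t ^ 2)) := by
  have ht0 : (0:ℝ) < t := lt_trans one_pos h1
  have htne : t ≠ 0 := ne_of_gt ht0
  have htm : t - 1 ≠ 0 := by intro h; linarith
  rw [detlem t u v h1 h2 hs]
  field_simp
  linear_combination (4 * (u * v)) * hs

lemma entry11 (t u v : ℝ) (h1 : 1 < t) (h2 : t < 2) (hs : u * u + v * v = t ^ 2) :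
    ((t / (2 * (t - 1)) - (t ^ 2)⁻¹ * ((t - 1)⁻¹ * 2⁻¹) * (u * u)) *
            (t / (2 * (t - 1)) - (t ^ 2)⁻¹ * ((t - 1)⁻¹ * 2⁻¹) * (v * v)) -
          (t ^ 2)⁻¹ * ((t - 1)⁻¹ * 2⁻¹) * (u * v) * ((t ^ 2)⁻¹ * ((t - 1)⁻¹ * 2⁻¹) * (v * u)))⁻¹ *
      ((t ^ 2)⁻¹ * ((t - 1)⁻¹ * 2⁻¹) * (v * u) * ((t ^ 2)⁻¹ * ((t - 1)⁻¹ * 2⁻¹) * (v * u)) +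
        (t / (2 * (t - 1)) - (t ^ 2)⁻¹ * ((t - 1)⁻¹ * 2⁻¹) * (v * v)) *
          (t / (2 * (t - 1)) - (t ^ 2)⁻¹ * ((t - 1)⁻¹ * 2⁻¹) * (v * v))) =
    (t - 1) / t * (v * v / t ^ 2) + t / (t - 1) * (1 - v * v / t ^ 2) := by
  have ht0 : (0:ℝ) < t := lt_trans one_pos h1
  have htne : t ≠ 0 := ne_of_gt ht0
  have htm : t - 1 ≠ 0 := by intro h; linarith
  rw [detlem t u v h1 h2 hs]
  field_simp
  linear_combination (4 * (v * v)) * hs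

/-- for the map `F(y) = (1 + |y|/2) y/|y|`, the push-forward
`(F_*σ₀)^{jk}(x) = (det DF)⁻¹ Σ_p ∂_pF^j ∂_pF^k` at `y = F⁻¹(x) = 2(|x|-1)x/|x|` of the
identity conductivity `σ₀ = I` equals
`σ(x) = ((|x|-1)/|x|) Π(x) + (|x|/(|x|-1)) (I - Π(x))` for `1 < |x| < 2`. -/
theorem stmt1 (x : EuclideanSpace ℝ (Fin 2)) (hx1 : 1 < ‖x‖) (hx2 : ‖x‖ < 2) :
    (Matrix.of fun j k =>
        (Matrix.det (Matrix.of fun p q =>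
            fderiv ℝ (fun z => cloakF z p) ((2 * (‖x‖ - 1) / ‖x‖) • x)
              (EuclideanSpace.single q 1)))⁻¹ *
          ∑ p, fderiv ℝ (fun z => cloakF z j) ((2 * (‖x‖ - 1) / ‖x‖) • x)
              (EuclideanSpace.single p 1) *
            fderiv ℝ (fun z => cloakF z k) ((2 * (‖x‖ - 1) / ‖x‖) • x)
              (EuclideanSpace.single p 1)) =
      ((‖x‖ - 1) / ‖x‖) • radialProj x + (‖x‖ / (‖x‖ - 1)) • (1 - radialProj x) := by
  have ht0 : (0 : ℝ) < ‖x‖ := lt_trans one_pos hx1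
  have htm : (0 : ℝ) < ‖x‖ - 1 := by linarith
  have hc : (0 : ℝ) < 2 * (‖x‖ - 1) / ‖x‖ := by positivity
  set y := (2 * (‖x‖ - 1) / ‖x‖) • x with hy
  have hyn : ‖y‖ = 2 * (‖x‖ - 1) := by
    rw [hy, norm_smul, Real.norm_of_nonneg hc.le]
    field_simp
  have hy0 : y ≠ 0 := by
    intro h
    rw [h, norm_zero] at hyn
    linarith
  have hy2 : ‖y‖ < 2 := by rw [hyn]; linarith
  have hyp : ∀ p, y p = 2 * (‖x‖ - 1) / ‖x‖ * x p := by
    intro p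
    rw [hy]
    simp
  have hder : ∀ p q, fderiv ℝ (fun z => cloakF z p) y (EuclideanSpace.single q 1)
      = (if p = q then ‖x‖ / (2 * (‖x‖ - 1)) else 0)
          - 1 / (2 * (‖x‖ - 1) * ‖x‖ ^ 2) * (x p * x q) := by
    intro p q
    rw [cloakF_fderiv y hy0 hy2 p q, hyn, hyp, hyp]
    rcases eq_or_ne p q with h | h
    · simp only [if_pos h]
      field_simp
      ring
    · simp only [if_neg h]
      field_simp
  have hs : x 0 * x 0 + x 1 * x 1 = ‖x‖ ^ 2 := by
    rw [← real_inner_self_eq_norm_sq]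
    rw [PiLp.inner_apply, Fin.sum_univ_two]
    simp only [RCLike.inner_apply, conj_trivial]
  simp only [hder]
  ext i j
  fin_cases i <;> fin_cases j <;>
    simp [Matrix.det_fin_two, Fin.sum_univ_two, radialProj, Matrix.add_apply,
      Matrix.smul_apply, Matrix.sub_apply, Matrix.one_apply, Matrix.of_apply,
      smul_eq_mul] <;>
    first
      | exact entry00 ‖x‖ (x 0) (x 1) hx1 hx2 hs
      | exact entry01 ‖x‖ (x 0) (x 1) hx1 hx2 hs
      | exact entry10 ‖x‖ (x 0) (x 1) hx1 hx2 hs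
      | exact entry11 ‖x‖ (x 0) (x 1) hx1 hx2 hs
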